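/- For y ∈ ℝⁿ and τ > 0, if ‖y‖₁ ≤ τ then the projection of y onto the ℓ₁ ball B = {x : ‖x‖₁ ≤ τ} is y itself; otherwise, there exists θ > 0 such that the soft-thresholded vector S_θ(y), with (S_θ(y))_i = sign(y_i)·max(0, |y_i| - θ), satisfies ‖S_θ(y)‖₁ = τ and S_θ(y) is the projection of y onto B. -/
import Mathlib


noncomputable def softThresh (lam y : ℝ) : ℝ := Real.sign y * max 0 (|y| - lam)

lemma softThresh_abs {lam : ℝ} (hlam : 0 ≤ lam) (y : ℝ) :
    |softThresh lam y| = max 0 (|y| - lam) := by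
  unfold softThresh
  rcases lt_trichotomy y 0 with h | h | h
  · rw [Real.sign_of_neg h, abs_mul]
    simp [abs_of_nonneg (le_max_left 0 (|y| - lam))]
  · simp [h, max_eq_left, hlam]
  · rw [Real.sign_of_pos h, abs_mul]
    simp [abs_of_nonneg (le_max_left 0 (|y| - lam))]

lemma softThresh_sub_abs {lam : ℝ} (hlam : 0 ≤ lam) (y : ℝ) :
    |y - softThresh lam y| ≤ lam := by
  unfold softThresh
  rcases le_or_gt (|y|) lam with h | h
  · rw [max_eq_left (by linarith)]
    simpa using h
  · have hy : y ≠ 0 := by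
      intro h0; rw [h0] at h; simp at h; linarith
    rw [max_eq_right (by linarith)]
    have : y - Real.sign y * (|y| - lam) = Real.sign y * lam := by
      rcases lt_trichotomy y 0 with hn | h0 | hp
      · rw [Real.sign_of_neg hn, abs_of_neg hn]; ring
      · exact absurd h0 hy
      · rw [Real.sign_of_pos hp, abs_of_pos hp]; ring
    rw [this, abs_mul]
    rcases lt_trichotomy y 0 with hn | h0 | hp
    · rw [Real.sign_of_neg hn]; simp [abs_of_nonneg hlam]
    · exact absurd h0 hy
    · rw [Real.sign_of_pos hp]; simp [abs_of_nonneg hlam]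

lemma softThresh_mul {lam : ℝ} (hlam : 0 ≤ lam) (y : ℝ) :
    softThresh lam y * (y - softThresh lam y) = lam * |softThresh lam y| := by
  rcases le_or_gt (|y|) lam with h | h
  · have : softThresh lam y = 0 := by
      unfold softThresh; rw [max_eq_left (by linarith)]; ring
    simp [this]
  · have hy : y ≠ 0 := by intro h0; rw [h0] at h; simp at h; linarith
    unfold softThresh
    rw [max_eq_right (by linarith)]
    rcases lt_trichotomy y 0 with hn | h0 | hp
    · rw [Real.sign_of_neg hn]
      rw [abs_of_neg hn] at h ⊢
      rw [show (-1 : ℝ) * (-y - lam) = y + lam by ring, abs_of_nonpos (by linarith)]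
      ring
    · exact absurd h0 hy
    · rw [Real.sign_of_pos hp]
      rw [abs_of_pos hp] at h ⊢
      rw [show (1 : ℝ) * (y - lam) = y - lam by ring, abs_of_nonneg (by linarith)]
      ring

/-- Projection onto the ℓ₁ ball {x : ‖x‖₁ ≤ τ}: if ‖y‖₁ ≤ τ the projection is y;
otherwise there is θ > 0 so that soft thresholding at level θ lands exactly on the
sphere ‖·‖₁ = τ and gives the (Euclidean) projection. -/
theorem l1_ball_projection (n : ℕ) (τ : ℝ) (hτ : 0 < τ) (y : Fin n → ℝ) :
    (∑ i, |y i| ≤ τ →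
      ∀ x : Fin n → ℝ, ∑ i, |x i| ≤ τ →
        ∑ i, (y i - y i)^2 ≤ ∑ i, (x i - y i)^2) ∧
    (¬ (∑ i, |y i| ≤ τ) →
      ∃ θ : ℝ, 0 < θ ∧
        (∑ i, |softThresh θ (y i)|) = τ ∧
        ∀ x : Fin n → ℝ, ∑ i, |x i| ≤ τ →
          ∑ i, (softThresh θ (y i) - y i)^2 ≤ ∑ i, (x i - y i)^2) := by
  constructor
  · intro _ x _
    have : ∀ i : Fin n, (y i - y i)^2 ≤ (x i - y i)^2 := fun i => by
      simp [sq_nonneg]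
    exact Finset.sum_le_sum fun i _ => this i
  · intro hgt
    push_neg at hgt
    set f : ℝ → ℝ := fun θ => ∑ i, max 0 (|y i| - θ) with hf
    set M : ℝ := ∑ i, |y i| with hM
    have hf0 : f 0 = M := by simp [hf, hM, abs_nonneg]
    have hfM : f M = 0 := by
      apply Finset.sum_eq_zero
      intro i _
      have : |y i| ≤ M := Finset.single_le_sum (f := fun j => |y j|)
        (fun j _ => abs_nonneg _) (Finset.mem_univ i)
      simp only [max_eq_left (show |y i| - M ≤ (0:ℝ) by linarith)]
    have hcont : ContinuousOn f (Set.Icc 0 M) := by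
      apply Continuous.continuousOn
      exact continuous_finset_sum _ fun i _ =>
        continuous_const.max (continuous_const.sub continuous_id)
    have hMem : τ ∈ Set.Icc (f M) (f 0) := by
      rw [hfM, hf0]; exact ⟨le_of_lt hτ, le_of_lt hgt⟩
    have h0M : (0:ℝ) ≤ M := le_of_lt (lt_trans hτ hgt)
    obtain ⟨θ, hθmem, hθval⟩ := intermediate_value_Icc' h0M hcont hMem
    have hθ0 : 0 ≤ θ := hθmem.1
    have hθpos : 0 < θ := by
      rcases eq_or_lt_of_le hθ0 with h | h
      · exfalso; rw [← h] at hθval; rw [hf0] at hθval; linarith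
      · exact h
    refine ⟨θ, hθpos, ?_, ?_⟩
    · rw [← hθval]
      exact Finset.sum_congr rfl fun i _ => softThresh_abs (le_of_lt hθpos) (y i)
    · intro x hx
      set z : Fin n → ℝ := fun i => softThresh θ (y i) with hz
      have hzsum : ∑ i, |z i| = τ := by
        rw [← hθval]
        exact Finset.sum_congr rfl fun i _ => softThresh_abs (le_of_lt hθpos) (y i)
      have key : ∑ i, (x i - z i) * (y i - z i) ≤ 0 := by
        have h1 : ∑ i, x i * (y i - z i) ≤ θ * τ := by
          calc ∑ i, x i * (y i - z i) ≤ ∑ i, |x i| * θ := by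
                apply Finset.sum_le_sum
                intro i _
                calc x i * (y i - z i) ≤ |x i * (y i - z i)| := le_abs_self _
                  _ = |x i| * |y i - z i| := abs_mul _ _
                  _ ≤ |x i| * θ := by
                      exact mul_le_mul_of_nonneg_left
                        (softThresh_sub_abs (le_of_lt hθpos) (y i)) (abs_nonneg _)
            _ = (∑ i, |x i|) * θ := by rw [← Finset.sum_mul]
            _ ≤ τ * θ := mul_le_mul_of_nonneg_right hx (le_of_lt hθpos)
            _ = θ * τ := mul_comm _ _
        have h2 : ∑ i, z i * (y i - z i) = θ * τ := by
          calc ∑ i, z i * (y i - z i) = ∑ i, θ * |z i| :=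
                Finset.sum_congr rfl fun i _ => softThresh_mul (le_of_lt hθpos) (y i)
            _ = θ * ∑ i, |z i| := by rw [Finset.mul_sum]
            _ = θ * τ := by rw [hzsum]
        have : ∑ i, (x i - z i) * (y i - z i)
            = ∑ i, x i * (y i - z i) - ∑ i, z i * (y i - z i) := by
          rw [← Finset.sum_sub_distrib]
          exact Finset.sum_congr rfl fun i _ => by ring
        rw [this, h2]; linarith
      have expand : ∑ i, (x i - y i)^2
          = ∑ i, (z i - y i)^2 + ∑ i, (x i - z i)^2
            - 2 * ∑ i, (x i - z i) * (y i - z i) := by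
        rw [← Finset.sum_add_distrib, Finset.mul_sum, ← Finset.sum_sub_distrib]
        exact Finset.sum_congr rfl fun i _ => by ring
      have hsq : 0 ≤ ∑ i, (x i - z i)^2 :=
        Finset.sum_nonneg fun i _ => sq_nonneg _
      rw [expand]; linarith
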